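/- Let $z = a_z n_z$ be an $m \times m$ upper triangular matrix with positive diagonal $a_z = \mathrm{diag}(a_1, \ldots, a_m)$ and unipotent part $n_z$ with off-diagonal entries in $[-1/2, 1/2]$, and let $\Lambda_z$ be the lattice spanned by the columns $z_1, \ldots, z_m$ of $z$. Then for each $j$, the vectors $\pm \frac{a_j}{2} e_j$ lie in the Dirichlet domain $\mathrm{Dir}(\Lambda_z)$. -/

import Mathlib

open Matrix

noncomputable def colVec (m : ℕ) (z : Matrix (Fin m) (Fin m) ℝ) (j : Fin m) :
    EuclideanSpace ℝ (Fin m) :=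
  (WithLp.equiv 2 (Fin m → ℝ)).symm (fun i => z i j)

lemma coord_le_norm {m : ℕ} (w : EuclideanSpace ℝ (Fin m)) (k : Fin m) : |w k| ≤ ‖w‖ := by
  have h := abs_real_inner_le_norm (EuclideanSpace.single k (1:ℝ)) w
  rw [EuclideanSpace.norm_single] at h
  simpa [EuclideanSpace.inner_single_left] using h

lemma sum_colVec_apply {m : ℕ} (z : Matrix (Fin m) (Fin m) ℝ) (c : Fin m → ℤ) (k : Fin m) :
    (∑ i, c i • colVec m z i) k = ∑ i, (c i : ℝ) * z k i := by
  have h : (∑ i, c i • colVec m z i) k = ∑ i, (c i • colVec m z i) k :=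
    by rw [WithLp.ofLp_sum]; exact Finset.sum_apply k Finset.univ _
  rw [h]
  refine Finset.sum_congr rfl fun i _ => ?_
  have h2 : (c i • colVec m z i) k = c i • (colVec m z i k) := rfl
  have h3 : colVec m z i k = z k i := rfl
  rw [h2, h3, zsmul_eq_mul]

/-- If `z = a_z n_z` is upper triangular with positive diagonal, unipotent part with entries in
`[-1/2, 1/2]`, and reduced columns, then the vectors `±(a_j/2) e_j` lie in the Dirichlet
domain of the lattice spanned by the columns of `z`. -/
theorem stmt9 (m : ℕ) (z : Matrix (Fin m) (Fin m) ℝ)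
    (hupper : ∀ i j : Fin m, j < i → z i j = 0)
    (hdiag : ∀ i : Fin m, 0 < z i i)
    (hunip : ∀ i j : Fin m, i < j → |z i j| ≤ z i i / 2)
    (hred : ∀ (j : Fin m) (c : Fin m → ℤ),
        (∑ i, c i • colVec m z i) ∉ Submodule.span ℝ (colVec m z '' {i | i < j}) →
        z j j ≤ Metric.infDist (∑ i, c i • colVec m z i)
            (Submodule.span ℝ (colVec m z '' {i | i < j}) : Set (EuclideanSpace ℝ (Fin m))))
    (j : Fin m) (s : ℝ) (hs : s = 1 ∨ s = -1) (c : Fin m → ℤ) :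
    ‖s • EuclideanSpace.single j (z j j / 2)‖ ≤
      ‖s • EuclideanSpace.single j (z j j / 2) - ∑ i, c i • colVec m z i‖ := by
  set x : EuclideanSpace ℝ (Fin m) := s • EuclideanSpace.single j (z j j / 2) with hx
  set v : EuclideanSpace ℝ (Fin m) := ∑ i, c i • colVec m z i with hv
  have hs1 : |s| = 1 := by rcases hs with h | h <;> simp [h]
  have hjj : 0 < z j j := hdiag j
  have hxnorm : ‖x‖ = z j j / 2 := by
    rw [hx, norm_smul, EuclideanSpace.norm_single, Real.norm_eq_abs, Real.norm_eq_abs, hs1,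
      one_mul, abs_of_pos (by linarith)]
  by_cases hc : ∀ i, j ≤ i → c i = 0
  · -- all coefficients with index ≥ j vanish; compare j-th coordinate
    have hvj : v j = 0 := by
      rw [hv, sum_colVec_apply]
      refine Finset.sum_eq_zero fun i _ => ?_
      rcases lt_or_ge i j with h | h
      · rw [hupper j i h, mul_zero]
      · rw [hc i h]; simp
    have hxj : x j = s * (z j j / 2) := by
      have : x j = s * (EuclideanSpace.single j (z j j / 2)) j := rfl
      rw [this, EuclideanSpace.single_apply]; simp
    have hsub : (x - v) j = x j - v j := rfl
    have := coord_le_norm (x - v) j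
    rw [hsub, hvj, sub_zero, hxj, abs_mul, hs1, one_mul, abs_of_pos (by linarith)] at this
    rw [hxnorm]
    exact this
  · push_neg at hc
    obtain ⟨i0, hi0j, hi0⟩ := hc
    set V : Submodule ℝ (EuclideanSpace ℝ (Fin m)) :=
      Submodule.span ℝ (colVec m z '' {i | i < j}) with hV
    -- largest index with nonzero coefficient
    set S : Finset (Fin m) := Finset.univ.filter (fun i => c i ≠ 0) with hS
    have hSne : S.Nonempty := ⟨i0, by simp [hS, hi0]⟩
    set k : Fin m := S.max' hSne with hk
    have hck : c k ≠ 0 := by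
      have := S.max'_mem hSne
      simpa [hS] using this
    have hjk : j ≤ k := le_trans hi0j (S.le_max' i0 (by simp [hS, hi0]))
    have hgt : ∀ i, k < i → c i = 0 := by
      intro i hi
      by_contra h
      exact absurd (S.le_max' i (by simp [hS, h])) (not_le.mpr hi)
    have hvk : v k = (c k : ℝ) * z k k := by
      rw [hv, sum_colVec_apply]
      refine Finset.sum_eq_single k (fun i _ hik => ?_) (by simp)
      rcases lt_or_gt_of_ne hik with h | h
      · rw [hupper k i h, mul_zero]
      · rw [hgt i h]; simp
    have hvk0 : v k ≠ 0 := by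
      rw [hvk]
      exact mul_ne_zero (Int.cast_ne_zero.mpr hck) (ne_of_gt (hdiag k))
    -- every element of V has zero k-th coordinate
    have hVcoord : ∀ w ∈ V, w k = 0 := by
      intro w hw
      induction hw using Submodule.span_induction with
      | mem w hw =>
        obtain ⟨i, hi, rfl⟩ := hw
        have : (i : Fin m) < k := lt_of_lt_of_le hi hjk
        exact hupper k i this
      | zero => rfl
      | add a b _ _ ha hb =>
        have : (a + b) k = a k + b k := rfl
        rw [this, ha, hb, add_zero]
      | smul r a _ ha =>
        have : (r • a) k = r * a k := rfl
        rw [this, ha, mul_zero]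
    have hvV : v ∉ V := fun h => hvk0 (hVcoord v h)
    have h1 : z j j ≤ Metric.infDist v (V : Set (EuclideanSpace ℝ (Fin m))) := hred j c hvV
    have h2 : Metric.infDist v (V : Set (EuclideanSpace ℝ (Fin m))) ≤
        Metric.infDist x (V : Set (EuclideanSpace ℝ (Fin m))) + dist v x :=
      Metric.infDist_le_infDist_add_dist
    have h3 : Metric.infDist x (V : Set (EuclideanSpace ℝ (Fin m))) ≤ ‖x‖ := by
      have h0 : (0 : EuclideanSpace ℝ (Fin m)) ∈ (V : Set (EuclideanSpace ℝ (Fin m))) :=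
        V.zero_mem
      calc Metric.infDist x (V : Set (EuclideanSpace ℝ (Fin m))) ≤ dist x 0 :=
            Metric.infDist_le_dist_of_mem h0
        _ = ‖x‖ := dist_zero_right x
    have h4 : dist v x = ‖x - v‖ := by rw [dist_eq_norm, norm_sub_rev]
    rw [h4] at h2
    linarith
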